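/- Let Ω ⊆ EuclideanSpace ℝ (Fin 3) be a compact set and ρ : EuclideanSpace ℝ (Fin 3) → ℝ a bounded measurable function vanishing outside Ω. Define the super-potential u_ρ(x) = (1/8π) ∫_Ω ‖x−y‖ ρ(y) dy. Then for every x ∉ Ω, u_ρ is twice differentiable at x and its Laplacian satisfies Δu_ρ(x) = (1/4π) ∫_Ω ρ(y)/‖x−y‖ dy; equivalently, −Δu_ρ(x) = N_ρ(x), where N_ρ(x) = −(1/4π) ∫_Ω ρ(y)/‖x−y‖ dy is the Newton potential of ρ. -/

import Mathlib

open MeasureTheory BigOperators Real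

/-- The Laplacian of `f : ℝ³ → ℝ` at `x`, as the sum of second partial derivatives
along the standard coordinate directions. -/
noncomputable def lap (f : EuclideanSpace ℝ (Fin 3) → ℝ) (x : EuclideanSpace ℝ (Fin 3)) : ℝ :=
  ∑ i : Fin 3,
    fderiv ℝ (fun y => fderiv ℝ f y (EuclideanSpace.single i (1 : ℝ))) x
      (EuclideanSpace.single i (1 : ℝ))

open Topology

namespace SP
local notation "E" => EuclideanSpace ℝ (Fin 3)
local notation "⟪" x ", " y "⟫" => @inner ℝ _ _ x y
noncomputable def B : E →L[ℝ] E →L[ℝ] ℝ :=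
  LinearMap.mkContinuous₂ (innerₗ (EuclideanSpace ℝ (Fin 3))) 1
    (fun x y => by simpa using abs_real_inner_le_norm x y)
@[simp] lemma B_apply (v w : E) : B v w = ⟪v, w⟫ := rfl
noncomputable def k1 (z : E) : E →L[ℝ] ℝ := ‖z‖⁻¹ • B z
noncomputable def k2 (z : E) : E →L[ℝ] E →L[ℝ] ℝ :=
  ‖z‖⁻¹ • B + ((-(‖z‖ ^ 2)⁻¹) • k1 z).smulRight (B z)
lemma k1_apply (z v : E) : k1 z v = ‖z‖⁻¹ * ⟪z, v⟫ := by simp [k1]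
lemma k2_apply (z v w : E) :
    k2 z v w = ‖z‖⁻¹ * ⟪v, w⟫ - (‖z‖ ^ 2)⁻¹ * (‖z‖⁻¹ * ⟪z, v⟫) * ⟪z, w⟫ := by
  simp [k2, k1_apply]; ring

lemma k1_norm_le (z : E) : ‖k1 z‖ ≤ 1 := by
  refine ContinuousLinearMap.opNorm_le_bound _ zero_le_one (fun v => ?_)
  rw [k1_apply, one_mul]
  rcases eq_or_ne z 0 with h | h
  · simp [h]
  · have hzn : 0 < ‖z‖ := norm_pos_iff.mpr h
    calc ‖‖z‖⁻¹ * ⟪z, v⟫‖ = ‖z‖⁻¹ * |⟪z, v⟫| := by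
          rw [norm_mul]; simp [abs_of_nonneg (inv_nonneg.mpr hzn.le)]
      _ ≤ ‖z‖⁻¹ * (‖z‖ * ‖v‖) := by
          gcongr; exact abs_real_inner_le_norm z v
      _ = ‖v‖ := by field_simp

lemma k2_norm_le {z : E} (hz : z ≠ 0) : ‖k2 z‖ ≤ 2 / ‖z‖ := by
  have hzn : 0 < ‖z‖ := norm_pos_iff.mpr hz
  refine ContinuousLinearMap.opNorm_le_bound _ (by positivity) (fun v => ?_)
  refine ContinuousLinearMap.opNorm_le_bound _ (by positivity) (fun w => ?_)
  rw [k2_apply]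
  have h1 : |⟪v, w⟫| ≤ ‖v‖ * ‖w‖ := abs_real_inner_le_norm v w
  have h2 : |⟪z, v⟫| ≤ ‖z‖ * ‖v‖ := abs_real_inner_le_norm z v
  have h3 : |⟪z, w⟫| ≤ ‖z‖ * ‖w‖ := abs_real_inner_le_norm z w
  have e1 : ‖‖z‖⁻¹ * ⟪v, w⟫ - (‖z‖ ^ 2)⁻¹ * (‖z‖⁻¹ * ⟪z, v⟫) * ⟪z, w⟫‖
      ≤ ‖z‖⁻¹ * |⟪v, w⟫| + (‖z‖ ^ 2)⁻¹ * ‖z‖⁻¹ * (|⟪z, v⟫| * |⟪z, w⟫|) := by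
    rw [Real.norm_eq_abs]
    refine (abs_sub _ _).trans (le_of_eq ?_)
    rw [abs_mul, abs_mul, abs_mul, abs_mul,
      abs_of_nonneg (inv_nonneg.mpr hzn.le),
      abs_of_nonneg (inv_nonneg.mpr (pow_nonneg hzn.le 2))]
    ring
  refine e1.trans ?_
  have h5 : (‖z‖ ^ 2)⁻¹ * ‖z‖⁻¹ * (|⟪z, v⟫| * |⟪z, w⟫|) ≤ ‖z‖⁻¹ * (‖v‖ * ‖w‖) := by
    calc (‖z‖ ^ 2)⁻¹ * ‖z‖⁻¹ * (|⟪z, v⟫| * |⟪z, w⟫|)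
        ≤ (‖z‖ ^ 2)⁻¹ * ‖z‖⁻¹ * ((‖z‖ * ‖v‖) * (‖z‖ * ‖w‖)) := by
          gcongr <;> positivity
      _ = ‖z‖⁻¹ * (‖v‖ * ‖w‖) := by field_simp
  have h4 : ‖z‖⁻¹ * |⟪v, w⟫| ≤ ‖z‖⁻¹ * (‖v‖ * ‖w‖) := by gcongr
  calc ‖z‖⁻¹ * |⟪v, w⟫| + (‖z‖ ^ 2)⁻¹ * ‖z‖⁻¹ * (|⟪z, v⟫| * |⟪z, w⟫|)
      ≤ ‖z‖⁻¹ * (‖v‖ * ‖w‖) + ‖z‖⁻¹ * (‖v‖ * ‖w‖) := add_le_add h4 h5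
    _ = 2 / ‖z‖ * ‖v‖ * ‖w‖ := by field_simp; ring

lemma continuousAt_k1 {z : E} (hz : z ≠ 0) : ContinuousAt k1 z := by
  have hzn : ‖z‖ ≠ 0 := norm_ne_zero_iff.mpr hz
  exact (continuousAt_id.norm.inv₀ hzn).smul B.continuous.continuousAt

lemma continuousAt_k2 {z : E} (hz : z ≠ 0) : ContinuousAt k2 z := by
  have hzn : ‖z‖ ≠ 0 := norm_ne_zero_iff.mpr hz
  have h1 : ContinuousAt (fun w : E => ‖w‖⁻¹ • B) z :=
    (continuousAt_id.norm.inv₀ hzn).smul continuousAt_const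
  have h2 : ContinuousAt (fun w : E => ((-(‖w‖ ^ 2)⁻¹) • k1 w)) z := by
    refine ContinuousAt.smul (f := fun w : E => (-(‖w‖ ^ 2)⁻¹ : ℝ)) ?_ (continuousAt_k1 hz)
    exact ((continuousAt_id.norm.pow 2).inv₀ (pow_ne_zero 2 hzn)).neg
  have h3 : ContinuousAt (fun w : E => ((-(‖w‖ ^ 2)⁻¹) • k1 w).smulRight (B w)) z := by
    exact (ContinuousLinearMap.smulRightL ℝ (EuclideanSpace ℝ (Fin 3)) (EuclideanSpace ℝ (Fin 3) →L[ℝ] ℝ)).continuous₂.continuousAt.comp₂ h2 (B.continuous.continuousAt)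
  haveI : ContinuousAdd (E →L[ℝ] E →L[ℝ] ℝ) :=
    (inferInstance : IsTopologicalAddGroup (E →L[ℝ] E →L[ℝ] ℝ)).toContinuousAdd
  exact h1.add h3

lemma k2_trace {z : E} (hz : z ≠ 0) :
    ∑ i : Fin 3, k2 z (EuclideanSpace.single i 1) (EuclideanSpace.single i 1) = 2 / ‖z‖ := by
  have hzn : ‖z‖ ≠ 0 := norm_ne_zero_iff.mpr hz
  have h1 : ∀ i : Fin 3, ⟪z, EuclideanSpace.single i (1:ℝ)⟫ = z i := by
    intro i; rw [real_inner_comm]; simp [EuclideanSpace.inner_single_left]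
  have h2 : ∀ i : Fin 3, ⟪(EuclideanSpace.single i (1:ℝ) : E), EuclideanSpace.single i (1:ℝ)⟫ = 1 := by
    intro i; simp [EuclideanSpace.inner_single_left]
  have hsum : ∑ i : Fin 3, z i * z i = ‖z‖ ^ 2 := by
    have := real_inner_self_eq_norm_sq z
    rw [← this, PiLp.inner_apply]
    simp only [RCLike.inner_apply, conj_trivial]
  simp only [k2_apply, h1, h2]
  rw [Finset.sum_sub_distrib]
  simp only [← Finset.mul_sum, mul_one]
  rw [show ∑ i : Fin 3, (‖z‖ ^ 2)⁻¹ * (‖z‖⁻¹ * z i) * z i = (‖z‖ ^ 2)⁻¹ * ‖z‖⁻¹ * ∑ i : Fin 3, z i * z i by rw [Finset.mul_sum]; congr 1; funext i; ring]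
  rw [hsum]
  simp
  field_simp
  ring

lemma hasFDerivAt_norm' {z : E} (hz : z ≠ 0) :
    HasFDerivAt (fun w : E => ‖w‖) (k1 z) z := by
  have hzn : ‖z‖ ≠ 0 := norm_ne_zero_iff.mpr hz
  have h1 : HasFDerivAt (fun w : E => ‖w‖ ^ 2) (2 • innerSL ℝ z) z :=
    (hasStrictFDerivAt_norm_sq z).hasFDerivAt
  have h2 : HasDerivAt Real.sqrt (1 / (2 * Real.sqrt (‖z‖ ^ 2))) (‖z‖ ^ 2) :=
    Real.hasDerivAt_sqrt (pow_ne_zero 2 hzn)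
  have h3 := h2.comp_hasFDerivAt z h1
  have heq : (Real.sqrt ∘ fun w : E => ‖w‖ ^ 2) = fun w : E => ‖w‖ := by
    funext w; simp [Real.sqrt_sq (norm_nonneg w)]
  rw [heq] at h3
  refine h3.congr_fderiv ?_
  rw [Real.sqrt_sq (norm_nonneg z)]
  ext w
  simp [k1]
  field_simp

lemma hasFDerivAt_k1 {z : E} (hz : z ≠ 0) : HasFDerivAt k1 (k2 z) z := by
  have hzn : ‖z‖ ≠ 0 := norm_ne_zero_iff.mpr hz
  have hinv : HasFDerivAt (fun w : E => ‖w‖⁻¹) ((-(‖z‖ ^ 2)⁻¹) • k1 z) z :=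
    (hasDerivAt_inv hzn).comp_hasFDerivAt z (hasFDerivAt_norm' hz)
  have hlin : HasFDerivAt (fun w : E => B w) B z := B.hasFDerivAt
  exact hinv.smul hlin


lemma hasFDerivAt_norm_sub {y w : E} (h : w - y ≠ 0) :
    HasFDerivAt (fun w : E => ‖w - y‖) (k1 (w - y)) w := by
  have := (hasFDerivAt_norm' h).comp w ((hasFDerivAt_id w).sub_const y)
  exact this

lemma hasFDerivAt_k1_sub {y w : E} (h : w - y ≠ 0) :
    HasFDerivAt (fun w : E => k1 (w - y)) (k2 (w - y)) w := by
  have := (hasFDerivAt_k1 h).comp w ((hasFDerivAt_id w).sub_const y)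
  exact this

lemma integrable_of_bdd {X : Type*} [NormedAddCommGroup X] {Ω : Set E} (hΩ : IsCompact Ω)
    {f : E → X} (hf : AEStronglyMeasurable f (volume.restrict Ω)) {C : ℝ}
    (h : ∀ y ∈ Ω, ‖f y‖ ≤ C) : Integrable f (volume.restrict Ω) := by
  haveI : IsFiniteMeasure (volume.restrict Ω) :=
    ⟨by rw [Measure.restrict_apply_univ]; exact hΩ.measure_lt_top⟩
  refine Integrable.mono' (integrable_const C) hf ?_
  exact (ae_restrict_mem hΩ.isClosed.measurableSet).mono h

end SP

set_option maxHeartbeats 1000000 in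
set_option synthInstance.maxHeartbeats 400000 in
open SP in
theorem superpotential_neg_laplacian_eq_newton_potential
    (Ω : Set (EuclideanSpace ℝ (Fin 3))) (hΩ : IsCompact Ω)
    (ρ : EuclideanSpace ℝ (Fin 3) → ℝ) (hρ : Measurable ρ)
    (M : ℝ) (hρbd : ∀ y, |ρ y| ≤ M)
    (hρ0 : ∀ y ∉ Ω, ρ y = 0)
    (u : EuclideanSpace ℝ (Fin 3) → ℝ)
    (hu : u = fun x => (1 / (8 * π)) * ∫ y in Ω, ‖x - y‖ * ρ y)
    (x : EuclideanSpace ℝ (Fin 3)) (hx : x ∉ Ω) :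
    ContDiffAt ℝ 2 u x ∧
      lap u x = (1 / (4 * π)) * ∫ y in Ω, ρ y / ‖x - y‖ := by
  have hΩm : MeasurableSet Ω := hΩ.isClosed.measurableSet
  haveI : IsFiniteMeasure (volume.restrict Ω) :=
    ⟨by rw [Measure.restrict_apply_univ]; exact hΩ.measure_lt_top⟩
  have hM0 : 0 ≤ M := le_trans (abs_nonneg _) (hρbd x)
  have hρn : ∀ y, ‖ρ y‖ ≤ M := fun y => by simpa [Real.norm_eq_abs] using hρbd y
  obtain ⟨ε, hε, hεΩ⟩ : ∃ ε > 0, ∀ y ∈ Ω, 2 * ε ≤ dist x y := by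
    rcases Set.eq_empty_or_nonempty Ω with h | h
    · exact ⟨1, one_pos, by simp [h]⟩
    · have hd : 0 < Metric.infDist x Ω :=
        (hΩ.isClosed.notMem_iff_infDist_pos h).mp hx
      refine ⟨Metric.infDist x Ω / 2, by linarith, fun y hy => ?_⟩
      have := Metric.infDist_le_dist_of_mem (x := x) hy
      linarith
  have hdist : ∀ z ∈ Metric.ball x ε, ∀ y ∈ Ω, ε ≤ ‖z - y‖ := by
    intro z hz y hy
    have h1 : dist z x < ε := Metric.mem_ball.mp hz
    have h2 := hεΩ y hy
    have h3 : dist x y ≤ dist x z + dist z y := dist_triangle _ _ _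
    rw [dist_comm x z] at h3
    rw [← dist_eq_norm]
    linarith
  have hne : ∀ z ∈ Metric.ball x ε, ∀ y ∈ Ω, z - y ≠ 0 := by
    intro z hz y hy h
    have := hdist z hz y hy
    rw [h, norm_zero] at this; linarith
  obtain ⟨R, hR0, hR⟩ : ∃ R, 0 ≤ R ∧ ∀ y ∈ Ω, ‖y‖ ≤ R := by
    obtain ⟨r, hr⟩ := (Metric.isBounded_iff_subset_closedBall 0).mp hΩ.isBounded
    exact ⟨max r 0, le_max_right r 0,
      fun y hy => le_trans (by simpa using hr hy) (le_max_left r 0)⟩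
  have A0 : ∀ z : EuclideanSpace ℝ (Fin 3),
      AEStronglyMeasurable (fun y => ‖z - y‖ * ρ y) (volume.restrict Ω) :=
    fun z => ((continuous_const.sub continuous_id).norm.aestronglyMeasurable).mul
      hρ.aestronglyMeasurable
  have A1 : ∀ z ∈ Metric.ball x ε,
      AEStronglyMeasurable (fun y => ρ y • k1 (z - y)) (volume.restrict Ω) := by
    intro z hz
    refine hρ.aestronglyMeasurable.smul (ContinuousOn.aestronglyMeasurable ?_ hΩm)
    intro y hy
    exact ((continuousAt_k1 (hne z hz y hy)).comp
      ((continuous_const.sub continuous_id).continuousAt)).continuousWithinAt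
  have A2 : ∀ z ∈ Metric.ball x ε,
      AEStronglyMeasurable (fun y => ρ y • k2 (z - y)) (volume.restrict Ω) := by
    intro z hz
    refine hρ.aestronglyMeasurable.smul (ContinuousOn.aestronglyMeasurable ?_ hΩm)
    intro y hy
    exact ((continuousAt_k2 (hne z hz y hy)).comp
      ((continuous_const.sub continuous_id).continuousAt)).continuousWithinAt
  have bd1 : ∀ (w y : EuclideanSpace ℝ (Fin 3)), ‖ρ y • k1 (w - y)‖ ≤ M := by
    intro w y
    refine (ContinuousLinearMap.opNorm_smul_le (ρ y) (k1 (w - y))).trans ?_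
    calc ‖ρ y‖ * ‖k1 (w - y)‖ ≤ M * 1 :=
          mul_le_mul (hρn y) (k1_norm_le _) (norm_nonneg _) hM0
      _ = M := mul_one M
  have bd2 : ∀ w ∈ Metric.ball x ε, ∀ y ∈ Ω, ‖ρ y • k2 (w - y)‖ ≤ M * (2 / ε) := by
    intro w hw y hy
    refine (ContinuousLinearMap.opNorm_smul_le (ρ y) (k2 (w - y))).trans ?_
    refine mul_le_mul (hρn y) ?_ (norm_nonneg _) hM0
    refine (k2_norm_le (hne w hw y hy)).trans ?_
    have h1 := hdist w hw y hy
    gcongr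
  set g : EuclideanSpace ℝ (Fin 3) → ℝ := fun z => ∫ y in Ω, ‖z - y‖ * ρ y with hgdef
  set G1 : EuclideanSpace ℝ (Fin 3) → EuclideanSpace ℝ (Fin 3) →L[ℝ] ℝ :=
    fun z => ∫ y in Ω, ρ y • k1 (z - y) with hG1def
  set G2 : EuclideanSpace ℝ (Fin 3) → EuclideanSpace ℝ (Fin 3) →L[ℝ]
      EuclideanSpace ℝ (Fin 3) →L[ℝ] ℝ :=
    fun z => ∫ y in Ω, ρ y • k2 (z - y) with hG2def
  have hA : ∀ z₀ ∈ Metric.ball x ε, HasFDerivAt g (G1 z₀) z₀ := by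
    intro z₀ hz₀
    have hδ : (0:ℝ) < ε - dist z₀ x := by
      rw [Metric.mem_ball] at hz₀; linarith
    have hsub : Metric.ball z₀ (ε - dist z₀ x) ⊆ Metric.ball x ε := by
      intro w hw
      rw [Metric.mem_ball] at hw ⊢
      have := dist_triangle w z₀ x
      linarith
    refine hasFDerivAt_integral_of_dominated_of_fderiv_le
      (F' := fun w y => ρ y • k1 (w - y)) (bound := fun _ => M) (Metric.ball_mem_nhds z₀ hδ)
      (Filter.Eventually.of_forall (fun w => A0 w)) ?_ (A1 z₀ hz₀) ?_ (integrable_const M) ?_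
    · refine integrable_of_bdd hΩ (A0 z₀) (C := (‖z₀‖ + R) * M) (fun y hy => ?_)
      rw [norm_mul, norm_norm]
      refine mul_le_mul ?_ (hρn y) (norm_nonneg _) (add_nonneg (norm_nonneg _) hR0)
      calc ‖z₀ - y‖ ≤ ‖z₀‖ + ‖y‖ := norm_sub_le _ _
        _ ≤ ‖z₀‖ + R := by have := hR y hy; linarith
    · exact (ae_restrict_mem hΩm).mono (fun y hy w hw => bd1 w y)
    · refine (ae_restrict_mem hΩm).mono (fun y hy w hw => ?_)
      exact (hasFDerivAt_norm_sub (hne w (hsub hw) y hy)).mul_const (ρ y)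
  have hB : ∀ z₀ ∈ Metric.ball x ε, HasFDerivAt G1 (G2 z₀) z₀ := by
    intro z₀ hz₀
    have hδ : (0:ℝ) < ε - dist z₀ x := by
      rw [Metric.mem_ball] at hz₀; linarith
    have hsub : Metric.ball z₀ (ε - dist z₀ x) ⊆ Metric.ball x ε := by
      intro w hw
      rw [Metric.mem_ball] at hw ⊢
      have := dist_triangle w z₀ x
      linarith
    refine hasFDerivAt_integral_of_dominated_of_fderiv_le
      (F' := fun w y => ρ y • k2 (w - y)) (bound := fun _ => M * (2 / ε)) (Metric.ball_mem_nhds z₀ hδ)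
      ?_ ?_ (A2 z₀ hz₀) ?_ (integrable_const _) ?_
    · exact Filter.eventually_of_mem (Metric.isOpen_ball.mem_nhds hz₀)
        (fun w hw => A1 w hw)
    · exact integrable_of_bdd hΩ (A1 z₀ hz₀) (C := M) (fun y hy => bd1 z₀ y)
    · exact (ae_restrict_mem hΩm).mono (fun y hy w hw => bd2 w (hsub hw) y hy)
    · refine (ae_restrict_mem hΩm).mono (fun y hy w hw => ?_)
      exact (hasFDerivAt_k1_sub (hne w (hsub hw) y hy)).const_smul (ρ y)
  have hC : ∀ z ∈ Metric.ball x ε, ContinuousAt G2 z := by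
    intro z hz
    refine continuousAt_of_dominated
      (bound := fun _ => M * (2 / ε)) ?_ ?_ (integrable_const _) ?_
    · exact Filter.eventually_of_mem (Metric.isOpen_ball.mem_nhds hz)
        (fun w hw => A2 w hw)
    · refine Filter.eventually_of_mem (Metric.isOpen_ball.mem_nhds hz)
        (fun w hw => (ae_restrict_mem hΩm).mono (fun y hy => bd2 w hw y hy))
    · refine (ae_restrict_mem hΩm).mono (fun y hy => ?_)
      have h4 : ContinuousAt (fun w : EuclideanSpace ℝ (Fin 3) => w - y) z :=
        (continuous_id.sub continuous_const).continuousAt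
      have h5 : ContinuousAt (fun w : EuclideanSpace ℝ (Fin 3) => k2 (w - y)) z :=
        ContinuousAt.comp (f := fun w : EuclideanSpace ℝ (Fin 3) => w - y) (x := z) (continuousAt_k2 (hne z hz y hy)) h4
      exact h5.const_smul (ρ y)
  have hxball : x ∈ Metric.ball x ε := Metric.mem_ball_self hε
  have hball : Metric.ball x ε ∈ 𝓝 x := Metric.isOpen_ball.mem_nhds hxball
  have hg2 : ContDiffOn ℝ 2 g (Metric.ball x ε) := by
    rw [show (2 : WithTop ℕ∞) = 1 + 1 by norm_num,
      contDiffOn_succ_iff_fderiv_of_isOpen Metric.isOpen_ball]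
    refine ⟨fun z hz => (hA z hz).differentiableAt.differentiableWithinAt, by simp, ?_⟩
    refine ContDiffOn.congr ?_ (fun z hz => (hA z hz).fderiv)
    rw [show (1 : WithTop ℕ∞) = 0 + 1 by norm_num,
      contDiffOn_succ_iff_fderiv_of_isOpen Metric.isOpen_ball]
    refine ⟨fun z hz => (hB z hz).differentiableAt.differentiableWithinAt, by simp, ?_⟩
    refine ContDiffOn.congr ?_ (fun z hz => (hB z hz).fderiv)
    rw [contDiffOn_zero]
    exact fun z hz => (hC z hz).continuousWithinAt
  have hcd : ContDiffAt ℝ 2 u x := by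
    rw [hu]
    exact contDiffAt_const.mul (hg2.contDiffAt hball)
  refine ⟨hcd, ?_⟩
  have hu' : ∀ z ∈ Metric.ball x ε, HasFDerivAt u ((1 / (8 * π)) • G1 z) z := by
    intro z hz
    rw [hu]
    exact (hA z hz).const_mul _
  letI : ContinuousENorm (EuclideanSpace ℝ (Fin 3) →L[ℝ] EuclideanSpace ℝ (Fin 3) →L[ℝ] ℝ) :=
    @SeminormedAddGroup.toContinuousENorm (EuclideanSpace ℝ (Fin 3) →L[ℝ] EuclideanSpace ℝ (Fin 3) →L[ℝ] ℝ) inferInstance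
  have hInt2 : Integrable (fun y => ρ y • k2 (x - y)) (volume.restrict Ω) :=
    integrable_of_bdd (X := EuclideanSpace ℝ (Fin 3) →L[ℝ] EuclideanSpace ℝ (Fin 3) →L[ℝ] ℝ) hΩ (A2 x hxball) (fun y hy => bd2 x hxball y hy)
  have key : ∀ i : Fin 3,
      fderiv ℝ (fun y => fderiv ℝ u y (EuclideanSpace.single i (1:ℝ))) x
          (EuclideanSpace.single i (1:ℝ))
        = (1 / (8 * π)) * (G2 x (EuclideanSpace.single i (1:ℝ))
            (EuclideanSpace.single i (1:ℝ))) := by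
    intro i
    set v := EuclideanSpace.single i (1:ℝ) with hv
    have heq : (fun y => fderiv ℝ u y v) =ᶠ[𝓝 x]
        (fun y => (1 / (8 * π)) * G1 y v) := by
      filter_upwards [hball] with z hz
      rw [(hu' z hz).fderiv]
      simp
    rw [heq.fderiv_eq]
    have h3 : HasFDerivAt (fun y => G1 y v)
        ((ContinuousLinearMap.apply ℝ ℝ v).comp (G2 x)) x :=
      (ContinuousLinearMap.apply ℝ ℝ v).hasFDerivAt.comp x (hB x hxball)
    have h2 : HasFDerivAt (fun y => (1 / (8 * π)) * G1 y v)
        ((1 / (8 * π)) • ((ContinuousLinearMap.apply ℝ ℝ v).comp (G2 x))) x :=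
      h3.const_mul _
    rw [h2.fderiv]
    simp
  rw [lap]
  simp only [key]
  rw [← Finset.mul_sum]
  have hval : ∀ i : Fin 3, G2 x (EuclideanSpace.single i (1:ℝ)) (EuclideanSpace.single i (1:ℝ))
      = ∫ y in Ω, (ρ y • k2 (x - y)) (EuclideanSpace.single i (1:ℝ))
          (EuclideanSpace.single i (1:ℝ)) := by
    intro i
    rw [hG2def]
    rw [ContinuousLinearMap.integral_apply hInt2]
    rw [ContinuousLinearMap.integral_apply (hInt2.apply_continuousLinearMap _)]
  simp only [hval]
  rw [← integral_finset_sum]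
  · have hEq : Set.EqOn
        (fun y => ∑ i : Fin 3, (ρ y • k2 (x - y)) (EuclideanSpace.single i (1:ℝ))
          (EuclideanSpace.single i (1:ℝ)))
        (fun y => 2 * (ρ y / ‖x - y‖)) Ω := by
      intro y hy
      simp only [ContinuousLinearMap.smul_apply, smul_eq_mul, ← Finset.mul_sum]
      rw [k2_trace (hne x hxball y hy)]
      ring
    rw [setIntegral_congr_fun hΩm hEq]
    rw [integral_const_mul]
    have hπ : (π : ℝ) ≠ 0 := Real.pi_ne_zero
    field_simp
    ring
  · intro i _
    refine integrable_of_bdd hΩ ?_ (C := M * (2 / ε)) ?_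
    · exact ((A2 x hxball).apply_continuousLinearMap _).apply_continuousLinearMap _
    · intro y hy
      have h1 := bd2 x hxball y hy
      have h2 : ‖(ρ y • k2 (x - y)) (EuclideanSpace.single i (1:ℝ))
          (EuclideanSpace.single i (1:ℝ))‖
          ≤ ‖ρ y • k2 (x - y)‖ * ‖(EuclideanSpace.single i (1:ℝ) :
            EuclideanSpace ℝ (Fin 3))‖ * ‖(EuclideanSpace.single i (1:ℝ) :
            EuclideanSpace ℝ (Fin 3))‖ := by
        refine le_trans (ContinuousLinearMap.le_opNorm _ _) ?_
        gcongr
        exact ContinuousLinearMap.le_opNorm _ _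
      have h3 : ‖(EuclideanSpace.single i (1:ℝ) : EuclideanSpace ℝ (Fin 3))‖ = 1 := by
        simp [EuclideanSpace.norm_single]
      rw [h3, mul_one, mul_one] at h2
      exact h2.trans h1
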